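/- For the encoding–decoding round trip with scaling: if m ∈ R encodes z via the canonical embedding with scaling factor Δ, and e ∈ R is an error polynomial with ||σ(e)||_∞ ≤ B', then the decoding of m + e equals the decoding of m (i.e., rounding to the nearest Gaussian integer vector recovers z) provided Δ^{-1} B' < 1/2. -/

import Mathlib

open Polynomial

lemma round_int_add_small (n : ℤ) (x : ℝ) (hx : |x| < 1 / 2) :
    round ((n : ℝ) + x) = n := by
  rw [round_intCast_add, round_eq_zero_iff.2 ⟨by linarith [abs_lt.1 hx |>.1], abs_lt.1 hx |>.2⟩,
    add_zero]

/-- Encoding–decoding round trip with scaling: if `m ∈ ℤ[x]/(x^N+1)` encodes the Gaussian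
integer vector `z` via the canonical embedding with scaling factor `Δ` and `e` is an error
polynomial with `‖σ(e)‖_∞ ≤ B'`, then provided `Δ⁻¹·B' < 1/2`, decoding `m + e`
(dividing by `Δ` and rounding each coordinate to the nearest Gaussian integer) still
recovers `z`. -/
theorem stmt_19 (M N : ℕ) (hM : 2 < M) (hpow : ∃ k : ℕ, M = 2 ^ k) (hN : N = M / 2)
    (ζ : ℂ) (hζ : ζ = Complex.exp (2 * Real.pi * Complex.I / M))
    (Δ : ℝ) (hΔ : 0 < Δ) (B' : ℝ)
    (m e : ℤ[X]) (z : Fin (N / 2) → GaussianInt)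
    (hm : ∀ j : Fin (N / 2),
      Polynomial.aeval (ζ ^ (2 * (j : ℕ) + 1)) m =
        (Δ : ℂ) * (((z j).re : ℂ) + ((z j).im : ℂ) * Complex.I))
    (he : ∀ j : Fin (N / 2), ‖Polynomial.aeval (ζ ^ (2 * (j : ℕ) + 1)) e‖ ≤ B')
    (hsmall : Δ⁻¹ * B' < 1 / 2) :
    ∀ j : Fin (N / 2),
      (⟨round ((Polynomial.aeval (ζ ^ (2 * (j : ℕ) + 1)) (m + e) / (Δ : ℂ)).re),
        round ((Polynomial.aeval (ζ ^ (2 * (j : ℕ) + 1)) (m + e) / (Δ : ℂ)).im)⟩ :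
          GaussianInt) = z j := by
  intro j
  set w : ℂ := Polynomial.aeval (ζ ^ (2 * (j : ℕ) + 1)) e with hw
  have hΔc : (Δ : ℂ) ≠ 0 := Complex.ofReal_ne_zero.2 hΔ.ne'
  have hsum : Polynomial.aeval (ζ ^ (2 * (j : ℕ) + 1)) (m + e) / (Δ : ℂ) =
      (((z j).re : ℂ) + ((z j).im : ℂ) * Complex.I) + w / (Δ : ℂ) := by
    rw [map_add, hm j, ← hw, add_div, mul_div_cancel_left₀ _ hΔc]
  have habs : ‖w / (Δ : ℂ)‖ < 1 / 2 := by
    rw [norm_div, Complex.norm_real, Real.norm_eq_abs, abs_of_pos hΔ, div_eq_inv_mul]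
    calc Δ⁻¹ * ‖w‖ ≤ Δ⁻¹ * B' := by
          exact mul_le_mul_of_nonneg_left (he j) (inv_nonneg.2 hΔ.le)
      _ < 1 / 2 := hsmall
  have hre : |(w / (Δ : ℂ)).re| < 1 / 2 :=
    lt_of_le_of_lt (Complex.abs_re_le_norm _) habs
  have him : |(w / (Δ : ℂ)).im| < 1 / 2 :=
    lt_of_le_of_lt (Complex.abs_im_le_norm _) habs
  have hre' : (Polynomial.aeval (ζ ^ (2 * (j : ℕ) + 1)) (m + e) / (Δ : ℂ)).re =
      ((z j).re : ℝ) + (w / (Δ : ℂ)).re := by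
    rw [hsum]; simp
  have him' : (Polynomial.aeval (ζ ^ (2 * (j : ℕ) + 1)) (m + e) / (Δ : ℂ)).im =
      ((z j).im : ℝ) + (w / (Δ : ℂ)).im := by
    rw [hsum]; simp
  have : round ((Polynomial.aeval (ζ ^ (2 * (j : ℕ) + 1)) (m + e) / (Δ : ℂ)).re) = (z j).re := by
    rw [hre']; exact round_int_add_small _ _ hre
  have h2 : round ((Polynomial.aeval (ζ ^ (2 * (j : ℕ) + 1)) (m + e) / (Δ : ℂ)).im) = (z j).im := by
    rw [him']; exact round_int_add_small _ _ him
  exact Zsqrtd.ext_iff.2 ⟨this, h2⟩
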